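/- Under the hypotheses of cardinal interpolation (φ continuous, symmetric, sup_{x∈[0,1]^d} Σ_k |φ(x-k)| < ∞, and σ_φ > 0 on T^d), if a bounded sequence c : ℤ^d → ℝ satisfies Σ_{k∈ℤ^d} c_k φ(j-k) = 0 for all j ∈ ℤ^d, then c = 0. -/

import Mathlib

open scoped BigOperators

set_option maxHeartbeats 1000000

noncomputable section CardIntAux

open Complex
open scoped ENNReal NNReal

namespace CardInt

variable {d : ℕ}

/-- ℓ¹ sequence space over ℤ^d. -/
abbrev A (d : ℕ) := lp (fun _ : Fin d → ℤ => ℂ) 1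

instance factOne : Fact ((1:ℝ≥0∞) ≤ 1) := ⟨le_rfl⟩

lemma memℓp_one_iff {f : (Fin d → ℤ) → ℂ} :
    Memℓp f 1 ↔ Summable fun k => ‖f k‖ := by
  have h1 : (1:ℝ≥0∞).toReal = 1 := rfl
  rw [memℓp_gen_iff (by rw [h1]; norm_num)]
  simp [h1]

lemma summable_norm_coe (f : A d) : Summable fun k => ‖f k‖ :=
  memℓp_one_iff.1 (lp.memℓp f)

lemma norm_eq_tsum (f : A d) : ‖f‖ = ∑' k, ‖f k‖ := by
  rw [lp.norm_eq_tsum_rpow (by norm_num) f]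
  simp [Real.rpow_one]

/-- convolution of two (arbitrary) functions on ℤ^d. -/
def conv (f g : (Fin d → ℤ) → ℂ) : (Fin d → ℤ) → ℂ :=
  fun k => ∑' l, f l * g (k - l)

section convLemmas

variable {f g h : (Fin d → ℤ) → ℂ}

/-- the regrouping equivalence -/
def regroup (d : ℕ) : ((Fin d → ℤ) × (Fin d → ℤ)) ≃ ((Fin d → ℤ) × (Fin d → ℤ)) where
  toFun p := (p.2, p.1 - p.2)
  invFun q := (q.1 + q.2, q.1)
  left_inv p := by simp
  right_inv q := by simp

lemma summable_conv_prod (hf : Summable fun k => ‖f k‖) (hg : Summable fun k => ‖g k‖) :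
    Summable fun p : (Fin d → ℤ) × (Fin d → ℤ) => ‖f p.2 * g (p.1 - p.2)‖ := by
  have h0 : Summable fun p : (Fin d → ℤ) × (Fin d → ℤ) => ‖f p.1‖ * ‖g p.2‖ :=
    hf.mul_of_nonneg hg (fun _ => norm_nonneg _) (fun _ => norm_nonneg _)
  have := (regroup d).summable_iff.2 h0
  simpa [regroup, Function.comp_def, norm_mul] using this

lemma summable_fiber (hf : Summable fun k => ‖f k‖) (hg : Summable fun k => ‖g k‖)
    (k : Fin d → ℤ) : Summable fun l => ‖f l * g (k - l)‖ :=
  (summable_conv_prod hf hg).prod_factor k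

lemma summable_summand (hf : Summable fun k => ‖f k‖) (hg : Summable fun k => ‖g k‖)
    (k : Fin d → ℤ) : Summable fun l => f l * g (k - l) :=
  (summable_fiber hf hg k).of_norm

lemma summable_norm_conv (hf : Summable fun k => ‖f k‖) (hg : Summable fun k => ‖g k‖) :
    Summable fun k => ‖conv f g k‖ := by
  have hu : Summable fun k => ∑' l, ‖f l * g (k - l)‖ :=
    ((summable_conv_prod hf hg).hasSum.prod_fiberwise
      (fun k => (summable_fiber hf hg k).hasSum)).summable
  exact Summable.of_nonneg_of_le (fun _ => norm_nonneg _)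
    (fun k => norm_tsum_le_tsum_norm (summable_fiber hf hg k)) hu

lemma tsum_norm_conv_le (hf : Summable fun k => ‖f k‖) (hg : Summable fun k => ‖g k‖) :
    (∑' k, ‖conv f g k‖) ≤ (∑' k, ‖f k‖) * (∑' k, ‖g k‖) := by
  have hu : Summable fun k => ∑' l, ‖f l * g (k - l)‖ :=
    ((summable_conv_prod hf hg).hasSum.prod_fiberwise
      (fun k => (summable_fiber hf hg k).hasSum)).summable
  have h1 : (∑' k, ‖conv f g k‖) ≤ ∑' k, ∑' l, ‖f l * g (k - l)‖ :=
    Summable.tsum_le_tsum (fun k => norm_tsum_le_tsum_norm (summable_fiber hf hg k))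
      (summable_norm_conv hf hg) hu
  have h0 : Summable fun p : (Fin d → ℤ) × (Fin d → ℤ) => ‖f p.1‖ * ‖g p.2‖ :=
    hf.mul_of_nonneg hg (fun _ => norm_nonneg _) (fun _ => norm_nonneg _)
  have h2 : (∑' k, ∑' l, ‖f l * g (k - l)‖)
      = ∑' p : (Fin d → ℤ) × (Fin d → ℤ), ‖f p.2 * g (p.1 - p.2)‖ :=
    (Summable.tsum_prod' (summable_conv_prod hf hg) (summable_fiber hf hg)).symm
  have h3 : (∑' p : (Fin d → ℤ) × (Fin d → ℤ), ‖f p.2 * g (p.1 - p.2)‖)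
      = ∑' p : (Fin d → ℤ) × (Fin d → ℤ), ‖f p.1‖ * ‖g p.2‖ := by
    rw [← (regroup d).tsum_eq (fun p : (Fin d → ℤ) × (Fin d → ℤ) => ‖f p.1‖ * ‖g p.2‖)]
    exact tsum_congr fun p => by simp [regroup, norm_mul]
  have h4 : (∑' p : (Fin d → ℤ) × (Fin d → ℤ), ‖f p.1‖ * ‖g p.2‖)
      = (∑' k, ‖f k‖) * (∑' k, ‖g k‖) := (Summable.tsum_mul_tsum hf hg h0).symm
  calc (∑' k, ‖conv f g k‖) ≤ _ := h1
    _ = _ := h2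
    _ = _ := h3
    _ = _ := h4

lemma conv_comm (f g : (Fin d → ℤ) → ℂ) : conv f g = conv g f := by
  funext k
  have := (Equiv.subLeft k).tsum_eq (fun l => g l * f (k - l))
  simp only [Equiv.subLeft_apply, sub_sub_cancel] at this
  rw [conv, conv, ← this]
  exact tsum_congr fun l => mul_comm _ _


set_option maxHeartbeats 1000000 in
lemma conv_assoc' (hf : Summable fun k => ‖f k‖) (hg : Summable fun k => ‖g k‖)
    (Ch : ℝ) (hh : ∀ x, ‖h x‖ ≤ Ch) :
    conv (conv f g) h = conv f (conv g h) := by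
  funext k
  have hP : Summable fun p : (Fin d → ℤ) × (Fin d → ℤ) =>
      f p.2 * g (p.1 - p.2) * h (k - p.1) := by
    refine Summable.of_norm (Summable.of_nonneg_of_le (fun _ => norm_nonneg _)
      (fun p => ?_) ((summable_conv_prod hf hg).mul_right Ch))
    rw [norm_mul]
    exact mul_le_mul_of_nonneg_left (hh _) (norm_nonneg _)
  have lhs : conv (conv f g) h k = ∑' p : (Fin d → ℤ) × (Fin d → ℤ),
      f p.2 * g (p.1 - p.2) * h (k - p.1) := by
    rw [conv]
    have h1 : ∀ l, conv f g l * h (k - l) = ∑' m, f m * g (l - m) * h (k - l) := by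
      intro l; rw [conv, tsum_mul_right]
    rw [tsum_congr h1]
    exact (Summable.tsum_prod' (f := fun p : (Fin d → ℤ) × (Fin d → ℤ) =>
      f p.2 * g (p.1 - p.2) * h (k - p.1)) hP
      fun l => (summable_summand hf hg l).mul_right (h (k - l))).symm
  have hgh : ∀ m, Summable fun n => g n * h (k - m - n) := by
    intro m
    refine Summable.of_norm (Summable.of_nonneg_of_le (fun _ => norm_nonneg _)
      (fun n => ?_) (hg.mul_right Ch))
    rw [norm_mul]
    exact mul_le_mul_of_nonneg_left (hh _) (norm_nonneg _)
  have hQ : Summable fun q : (Fin d → ℤ) × (Fin d → ℤ) =>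
      f q.1 * (g q.2 * h (k - q.1 - q.2)) := by
    refine Summable.of_norm (Summable.of_nonneg_of_le (fun _ => norm_nonneg _) (fun q => ?_)
      ((hf.mul_of_nonneg hg (fun _ => norm_nonneg _) (fun _ => norm_nonneg _)).mul_right Ch))
    rw [norm_mul, norm_mul, mul_assoc]
    exact mul_le_mul_of_nonneg_left
      (mul_le_mul_of_nonneg_left (hh _) (norm_nonneg _)) (norm_nonneg _)
  have rhs : conv f (conv g h) k = ∑' q : (Fin d → ℤ) × (Fin d → ℤ),
      f q.1 * (g q.2 * h (k - q.1 - q.2)) := by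
    rw [conv]
    have h2 : ∀ m, f m * conv g h (k - m) = ∑' n, f m * (g n * h (k - m - n)) := by
      intro m; rw [conv, ← tsum_mul_left]
    rw [tsum_congr h2]
    exact (Summable.tsum_prod' (f := fun q : (Fin d → ℤ) × (Fin d → ℤ) =>
      f q.1 * (g q.2 * h (k - q.1 - q.2))) hQ fun m => (hgh m).mul_left (f m)).symm
  rw [lhs, rhs]
  have e := (regroup d).tsum_eq (fun q : (Fin d → ℤ) × (Fin d → ℤ) =>
    f q.1 * (g q.2 * h (k - q.1 - q.2)))
  rw [← e]
  refine tsum_congr fun p => ?_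
  have harg : k - p.2 - (p.1 - p.2) = k - p.1 := by abel
  simp only [regroup, Equiv.coe_fn_mk, harg]
  ring


lemma conv_assoc (hf : Summable fun k => ‖f k‖) (hg : Summable fun k => ‖g k‖)
    (hh : Summable fun k => ‖h k‖) :
    conv (conv f g) h = conv f (conv g h) :=
  conv_assoc' hf hg (∑' k, ‖h k‖) fun x => Summable.le_tsum hh x fun _ _ => norm_nonneg _

end convLemmas

instance : Mul (A d) :=
  ⟨fun f g => ⟨conv (⇑f) (⇑g),
    memℓp_one_iff.2 (summable_norm_conv (summable_norm_coe f) (summable_norm_coe g))⟩⟩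

lemma mul_apply' (f g : A d) (k : Fin d → ℤ) : (f * g) k = ∑' l, f l * g (k - l) := rfl

lemma coe_mul (f g : A d) : ⇑(f * g) = conv (⇑f) (⇑g) := rfl

instance : One (A d) := ⟨lp.single 1 0 1⟩

lemma one_apply' (k : Fin d → ℤ) : (1 : A d) k = if k = 0 then 1 else 0 := by
  rcases eq_or_ne k 0 with rfl | hk
  · rw [if_pos rfl]; exact lp.single_apply_self (E := fun _ : Fin d → ℤ => ℂ) 1 0 1
  · simp only [hk, if_false]
    exact lp.single_apply_ne (E := fun _ : Fin d → ℤ => ℂ) 1 0 1 hk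

lemma lp_ext {f g : A d} (h : ∀ k, f k = g k) : f = g := Subtype.ext (funext h)

lemma conv_one_left (f : (Fin d → ℤ) → ℂ) : conv (⇑(1 : A d)) f = f := by
  funext k
  rw [conv]
  rw [tsum_eq_single (0 : Fin d → ℤ) (fun l hl => by simp [one_apply', hl])]
  simp [one_apply']

instance : CommRing (A d) :=
  { (inferInstance : AddCommGroup (A d)) with
    mul := (· * ·)
    one := 1
    mul_comm := fun f g => lp_ext fun k => by
      rw [mul_apply', mul_apply', ← conv, ← conv, conv_comm]
    left_distrib := fun f g h => lp_ext fun k => by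
      have hs1 := summable_summand (summable_norm_coe f) (summable_norm_coe g) k
      have hs2 := summable_summand (summable_norm_coe f) (summable_norm_coe h) k
      calc (f * (g + h)) k = ∑' l, (f l * g (k - l) + f l * h (k - l)) := by
            rw [mul_apply']
            exact tsum_congr fun l => by rw [lp.coeFn_add, Pi.add_apply, mul_add]
        _ = (f * g) k + (f * h) k := by
            rw [Summable.tsum_add hs1 hs2, mul_apply', mul_apply']
        _ = (f * g + f * h) k := by rw [lp.coeFn_add, Pi.add_apply]
    right_distrib := fun f g h => lp_ext fun k => by
      have hs1 := summable_summand (summable_norm_coe f) (summable_norm_coe h) k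
      have hs2 := summable_summand (summable_norm_coe g) (summable_norm_coe h) k
      calc ((f + g) * h) k = ∑' l, (f l * h (k - l) + g l * h (k - l)) := by
            rw [mul_apply']
            exact tsum_congr fun l => by rw [lp.coeFn_add, Pi.add_apply, add_mul]
        _ = (f * h) k + (g * h) k := by
            rw [Summable.tsum_add hs1 hs2, mul_apply', mul_apply']
        _ = (f * h + g * h) k := by rw [lp.coeFn_add, Pi.add_apply]
    zero_mul := fun f => lp_ext fun k => by
      have : ∀ l : Fin d → ℤ, (0 : A d) l * f (k - l) = 0 := by
        intro l; rw [lp.coeFn_zero]; simp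
      rw [mul_apply', tsum_congr this, tsum_zero, lp.coeFn_zero]; rfl
    mul_zero := fun f => lp_ext fun k => by
      have : ∀ l : Fin d → ℤ, f l * (0 : A d) (k - l) = 0 := by
        intro l; rw [lp.coeFn_zero]; simp
      rw [mul_apply', tsum_congr this, tsum_zero, lp.coeFn_zero]; rfl
    mul_assoc := fun f g h => lp_ext fun k =>
      congrFun (conv_assoc (summable_norm_coe f) (summable_norm_coe g)
        (summable_norm_coe h)) k
    one_mul := fun f => lp_ext fun k => congrFun (conv_one_left (⇑f)) k
    mul_one := fun f => lp_ext fun k => by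
      have h1 : (f * 1) k = conv (⇑(1 : A d)) (⇑f) k := by
        rw [mul_apply', ← conv, conv_comm]
      rw [h1, conv_one_left] }

instance : NormedCommRing (A d) :=
  { (inferInstance : CommRing (A d)), (inferInstance : NormedAddCommGroup (A d)) with
    norm_mul_le := fun f g => by
      rw [norm_eq_tsum, norm_eq_tsum f, norm_eq_tsum g]
      exact tsum_norm_conv_le (summable_norm_coe f) (summable_norm_coe g) }

instance : Algebra ℂ (A d) :=
  Algebra.ofModule
    (fun r f g => lp_ext fun k => by
      have h1 : ((r • f) * g) k = ∑' l, (r • f) l * g (k - l) := mul_apply' _ _ _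
      have h2 : ∀ l : Fin d → ℤ, (r • f) l * g (k - l) = r * (f l * g (k - l)) := by
        intro l; rw [lp.coeFn_smul, Pi.smul_apply, smul_eq_mul, mul_assoc]
      rw [h1, tsum_congr h2, tsum_mul_left, lp.coeFn_smul, Pi.smul_apply, smul_eq_mul,
        mul_apply'])
    (fun r f g => lp_ext fun k => by
      have h1 : (f * (r • g)) k = ∑' l, f l * (r • g) (k - l) := mul_apply' _ _ _
      have h2 : ∀ l : Fin d → ℤ, f l * (r • g) (k - l) = r * (f l * g (k - l)) := by
        intro l; rw [lp.coeFn_smul, Pi.smul_apply, smul_eq_mul]; ring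
      rw [h1, tsum_congr h2, tsum_mul_left, lp.coeFn_smul, Pi.smul_apply, smul_eq_mul,
        mul_apply'])

instance : NormedAlgebra ℂ (A d) :=
  { (inferInstance : Algebra ℂ (A d)) with
    norm_smul_le := fun r f => norm_smul_le r f }

instance : NormOneClass (A d) := by
  constructor
  have h := lp.norm_single (p := (1:ℝ≥0∞)) (E := fun _ : Fin d → ℤ => ℂ) (by norm_num)
    0 (1:ℂ)
  rw [show (1 : A d) = lp.single 1 0 1 from rfl, h, norm_one]

/-! ### single multiplication and characters -/

lemma single_coe (k j : Fin d → ℤ) :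
    (lp.single 1 k (1:ℂ) : A d) j = if j = k then 1 else 0 := by
  rcases eq_or_ne j k with rfl | hj
  · simpa using lp.single_apply_self (E := fun _ : Fin d → ℤ => ℂ) 1 j 1
  · simp only [hj, if_false]
    exact lp.single_apply_ne (E := fun _ : Fin d → ℤ => ℂ) 1 k 1 hj

lemma single_mul_single (j k : Fin d → ℤ) :
    (lp.single 1 j (1:ℂ) : A d) * lp.single 1 k 1 = lp.single 1 (j + k) 1 := by
  refine lp_ext fun m => ?_
  rw [mul_apply']
  rw [tsum_eq_single j (fun l hl => by simp [single_coe, hl])]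
  simp only [single_coe, sub_eq_iff_eq_add']
  simp

lemma norm_single_one (k : Fin d → ℤ) : ‖(lp.single 1 k (1:ℂ) : A d)‖ = 1 := by
  have h := lp.norm_single (p := (1:ℝ≥0∞)) (E := fun _ : Fin d → ℤ => ℂ) (by norm_num)
    k (1:ℂ)
  simpa using h

lemma one_eq_single : (1 : A d) = lp.single 1 0 1 := rfl

lemma addchar_sum {ι : Type*} (ψ : AddChar (Fin d → ℤ) ℂ) (s : Finset ι)
    (x : ι → Fin d → ℤ) : ψ (∑ i ∈ s, x i) = ∏ i ∈ s, ψ (x i) := by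
  classical
  induction s using Finset.induction with
  | empty => simp
  | insert a s h ih => rw [Finset.sum_insert h, Finset.prod_insert h, ψ.map_add_eq_mul, ih]

/-- Every character of the convolution algebra is given by a point of the torus. -/
lemma char_formula (χ : WeakDual.characterSpace ℂ (A d)) :
    ∃ t : Fin d → ℝ, ∀ f : A d,
      χ f = ∑' k, f k * Complex.exp ((↑(∑ i, (k i : ℝ) * t i)) * Complex.I) := by
  set z : (Fin d → ℤ) → ℂ := fun k => χ (lp.single 1 k 1) with hz
  have hz_mul : ∀ j k, z (j + k) = z j * z k := by
    intro j k
    rw [hz]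
    simp only
    rw [← map_mul χ, single_mul_single]
  have hz0 : z 0 = 1 := by
    rw [hz]; simp only; rw [← one_eq_single, map_one χ]
  have hz_le : ∀ k, ‖z k‖ ≤ 1 := by
    intro k
    have h1 := spectrum.norm_le_norm_of_mem (AlgHom.apply_mem_spectrum χ (lp.single 1 k 1))
    rwa [norm_single_one] at h1
  have hz_inv : ∀ k, z k * z (-k) = 1 := fun k => by
    rw [← hz_mul, add_neg_cancel, hz0]
  have hz_norm : ∀ k, ‖z k‖ = 1 := by
    intro k
    refine le_antisymm (hz_le k) ?_
    have h2 : ‖z k‖ * ‖z (-k)‖ = 1 := by rw [← norm_mul, hz_inv k, norm_one]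
    nlinarith [hz_le (-k), norm_nonneg (z k), norm_nonneg (z (-k))]
  -- z as an additive character
  set ψ : AddChar (Fin d → ℤ) ℂ := ⟨z, hz0, hz_mul⟩ with hψ
  have hψ_apply : ∀ k, ψ k = z k := fun _ => rfl
  set t : Fin d → ℝ := fun i => (z (Pi.single i 1)).arg with ht
  have he : ∀ i, z (Pi.single i 1) = Complex.exp ((t i : ℂ) * Complex.I) := by
    intro i
    have h3 := Complex.norm_mul_exp_arg_mul_I (z (Pi.single i 1))
    have h4 : (‖z (Pi.single i 1)‖ : ℂ) = 1 := by
      rw [hz_norm]; norm_num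
    rw [h4, one_mul] at h3
    exact h3.symm
  have zval : ∀ k, z k = Complex.exp ((↑(∑ i, (k i : ℝ) * t i)) * Complex.I) := by
    intro k
    have hk : (k : Fin d → ℤ) = ∑ i, Pi.single i (k i) := (Finset.univ_sum_single k).symm
    have h5 : z k = ∏ i, (z (Pi.single i 1)) ^ (k i) := by
      have h5a : ψ (∑ i, Pi.single i (k i)) = ∏ i, ψ (Pi.single i (k i)) :=
        addchar_sum ψ Finset.univ _
      rw [Finset.univ_sum_single] at h5a
      rw [← hψ_apply, h5a]
      refine Finset.prod_congr rfl fun i _ => ?_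
      have h6 : (Pi.single i (k i) : Fin d → ℤ) = (k i) • Pi.single i (1:ℤ) := by
        funext j
        rcases eq_or_ne j i with rfl | hj
        · simp
        · simp [Pi.single_apply, hj]
      rw [h6, ψ.map_zsmul_eq_zpow, hψ_apply]
    rw [h5]
    have h7 : ∀ i, (z (Pi.single i 1)) ^ (k i)
        = Complex.exp (((k i : ℝ) * t i : ℝ) * Complex.I) := by
      intro i
      rw [he i, ← Complex.exp_int_mul]
      congr 1
      push_cast
      ring
    rw [Finset.prod_congr rfl fun i _ => h7 i, ← Complex.exp_sum]
    congr 1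
    push_cast
    rw [Finset.sum_mul]
  refine ⟨t, fun f => ?_⟩
  have hsing : HasSum (fun k => lp.single 1 k (f k)) f :=
    lp.hasSum_single (by norm_num) f
  set χL : A d →L[ℂ] ℂ := (χ : WeakDual ℂ (A d)) with hχL
  have hχL_apply : ∀ g : A d, χL g = χ g := fun _ => rfl
  have hmap : HasSum (fun k => χL (lp.single 1 k (f k))) (χL f) := χL.hasSum hsing
  have hterm : ∀ k, χL (lp.single 1 k (f k)) = f k * z k := by
    intro k
    have h8 : lp.single 1 k (f k) = (f k) • (lp.single 1 k (1:ℂ) : A d) := by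
      rw [← lp.single_smul]
      congr 1
      simp
    rw [h8, map_smul, smul_eq_mul, hχL_apply]
  have hmap' : HasSum (fun k => f k * z k) (χL f) := by
    simpa only [hterm] using hmap
  rw [← hχL_apply, ← hmap'.tsum_eq]
  exact tsum_congr fun k => by rw [zval k]

/-! ### the symbol on the torus -/

/-- the cardinal symbol -/
def symb (φ : (Fin d → ℝ) → ℝ) (t : Fin d → ℝ) : ℝ :=
  ∑' k : Fin d → ℤ, φ (fun i => (k i : ℝ)) * Real.cos (∑ i, (k i : ℝ) * t i)

lemma symb_summand_summable (φ : (Fin d → ℝ) → ℝ)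
    (hs : Summable fun k : Fin d → ℤ => |φ (fun i => (k i : ℝ))|) (t : Fin d → ℝ) :
    Summable fun k : Fin d → ℤ => φ (fun i => (k i : ℝ)) * Real.cos (∑ i, (k i : ℝ) * t i) := by
  refine Summable.of_norm_bounded hs fun k => ?_
  rw [Real.norm_eq_abs, abs_mul]
  exact mul_le_of_le_one_right (abs_nonneg _) (Real.abs_cos_le_one _)

lemma symb_le (φ : (Fin d → ℝ) → ℝ)
    (hs : Summable fun k : Fin d → ℤ => |φ (fun i => (k i : ℝ))|) (t : Fin d → ℝ) :
    symb φ t ≤ ∑' k : Fin d → ℤ, |φ (fun i => (k i : ℝ))| := by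
  refine Summable.tsum_le_tsum (fun k => ?_) (symb_summand_summable φ hs t) hs
  calc φ (fun i => (k i : ℝ)) * Real.cos (∑ i, (k i : ℝ) * t i)
      ≤ |φ (fun i => (k i : ℝ)) * Real.cos (∑ i, (k i : ℝ) * t i)| := le_abs_self _
    _ ≤ |φ (fun i => (k i : ℝ))| := by
        rw [abs_mul]
        exact mul_le_of_le_one_right (abs_nonneg _) (Real.abs_cos_le_one _)

lemma symb_exists_min (φ : (Fin d → ℝ) → ℝ)
    (hs : Summable fun k : Fin d → ℤ => |φ (fun i => (k i : ℝ))|) :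
    ∃ t0 : Fin d → ℝ, ∀ t, symb φ t0 ≤ symb φ t := by
  have hcont : Continuous (symb φ) := by
    refine continuous_tsum (fun k => ?_) hs (fun k x => ?_)
    · exact continuous_const.mul (Real.continuous_cos.comp
        (continuous_finset_sum Finset.univ fun i _ => continuous_const.mul (continuous_apply i)))
    · rw [Real.norm_eq_abs, abs_mul]
      exact mul_le_of_le_one_right (abs_nonneg _) (Real.abs_cos_le_one _)
  have h0K : (0 : Fin d → ℝ) ∈ Set.Icc (0 : Fin d → ℝ) (fun _ => 2 * Real.pi) :=
    Set.mem_Icc.2 ⟨le_rfl, fun i => by positivity⟩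
  obtain ⟨t0, _, hmin⟩ :=
    (isCompact_Icc (a := (0 : Fin d → ℝ)) (b := fun _ => 2 * Real.pi)).exists_isMinOn
      ⟨0, h0K⟩ hcont.continuousOn
  refine ⟨t0, fun t => ?_⟩
  have hπ : (0:ℝ) < 2 * Real.pi := by positivity
  set t' : Fin d → ℝ := fun i => 2 * Real.pi * Int.fract (t i / (2 * Real.pi)) with ht'
  have ht'K : t' ∈ Set.Icc (0 : Fin d → ℝ) (fun _ => 2 * Real.pi) := by
    refine Set.mem_Icc.2 ⟨fun i => mul_nonneg hπ.le (Int.fract_nonneg _), fun i => ?_⟩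
    calc 2 * Real.pi * Int.fract (t i / (2 * Real.pi))
        ≤ 2 * Real.pi * 1 := by
          exact mul_le_mul_of_nonneg_left (Int.fract_lt_one _).le hπ.le
      _ = 2 * Real.pi := mul_one _
  have heq : symb φ t' = symb φ t := by
    refine tsum_congr fun k => ?_
    congr 1
    have hti : ∀ i, t i = t' i + 2 * Real.pi * ⌊t i / (2 * Real.pi)⌋ := by
      intro i
      simp only [ht', Int.fract]
      field_simp
      ring
    have hsum_eq : ∑ i, (k i : ℝ) * t i
        = ∑ i, ((k i : ℝ) * t' i + (k i : ℝ) * (2 * Real.pi * ⌊t i / (2 * Real.pi)⌋)) := by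
      refine Finset.sum_congr rfl fun i _ => ?_
      rw [← mul_add, ← hti i]
    have hB : ∑ i, (k i : ℝ) * (2 * Real.pi * ⌊t i / (2 * Real.pi)⌋)
        = ((∑ i, k i * ⌊t i / (2 * Real.pi)⌋ : ℤ) : ℝ) * (2 * Real.pi) := by
      push_cast
      rw [Finset.sum_mul]
      exact Finset.sum_congr rfl fun i _ => by ring
    rw [hsum_eq, Finset.sum_add_distrib, hB, Real.cos_add_int_mul_two_pi]
  rw [← heq]
  exact hmin ht'K

/-- the complex character sum of a symmetric ℓ¹ sequence is the (real) symbol value. -/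
lemma tsum_exp_eq_symb (φ : (Fin d → ℝ) → ℝ)
    (hsymm : ∀ x, φ (-x) = φ x)
    (hs : Summable fun k : Fin d → ℤ => |φ (fun i => (k i : ℝ))|) (t : Fin d → ℝ) :
    (∑' k : Fin d → ℤ, (φ (fun i => (k i : ℝ)) : ℂ)
        * Complex.exp ((↑(∑ i, (k i : ℝ) * t i)) * Complex.I))
      = ((symb φ t : ℝ) : ℂ) := by
  set φz : (Fin d → ℤ) → ℝ := fun k => φ (fun i => (k i : ℝ)) with hφz
  have hφz_symm : ∀ k, φz (-k) = φz k := by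
    intro k
    have h1 : (fun i => ((-k) i : ℝ)) = -(fun i => (k i : ℝ)) := by
      funext i; simp
    simp only [hφz, h1, hsymm]
  set θ : (Fin d → ℤ) → ℝ := fun k => ∑ i, (k i : ℝ) * t i with hθ
  have hθneg : ∀ k, θ (-k) = -θ k := by
    intro k
    simp only [hθ, ← Finset.sum_neg_distrib]
    refine Finset.sum_congr rfl fun i _ => ?_
    have : ((-k) i : ℝ) = -(k i : ℝ) := by rw [Pi.neg_apply]; push_cast; ring
    rw [this]
    ring
  have hcos_summ : Summable fun k => φz k * Real.cos (θ k) := symb_summand_summable φ hs t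
  have hsin_summ : Summable fun k => φz k * Real.sin (θ k) := by
    refine Summable.of_norm_bounded hs fun k => ?_
    rw [Real.norm_eq_abs, abs_mul]
    exact mul_le_of_le_one_right (abs_nonneg _) (Real.abs_sin_le_one _)
  have hsin_zero : (∑' k, φz k * Real.sin (θ k)) = 0 := by
    have e := (Equiv.neg (Fin d → ℤ)).tsum_eq (fun k => φz k * Real.sin (θ k))
    have h2 : ∀ k : Fin d → ℤ, φz (Equiv.neg (Fin d → ℤ) k) * Real.sin (θ (Equiv.neg (Fin d → ℤ) k))
        = -(φz k * Real.sin (θ k)) := by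
      intro k
      simp only [Equiv.neg_apply, hφz_symm, hθneg, Real.sin_neg]
      ring
    rw [tsum_congr h2, tsum_neg] at e
    linarith
  have hterm : ∀ k : Fin d → ℤ, (φz k : ℂ) * Complex.exp ((θ k : ℂ) * Complex.I)
      = ((φz k * Real.cos (θ k) : ℝ) : ℂ) + ((φz k * Real.sin (θ k) : ℝ) : ℂ) * Complex.I := by
    intro k
    rw [Complex.exp_mul_I, ← Complex.ofReal_cos, ← Complex.ofReal_sin]
    push_cast
    ring
  have hsumm1 : Summable fun k => ((φz k * Real.cos (θ k) : ℝ) : ℂ) := by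
    refine Summable.of_norm_bounded hs fun k => ?_
    rw [Complex.norm_real, Real.norm_eq_abs, abs_mul]
    exact mul_le_of_le_one_right (abs_nonneg _) (Real.abs_cos_le_one _)
  have hsumm2 : Summable fun k => ((φz k * Real.sin (θ k) : ℝ) : ℂ) * Complex.I := by
    refine Summable.of_norm_bounded hs fun k => ?_
    rw [norm_mul, Complex.norm_I, mul_one, Complex.norm_real, Real.norm_eq_abs, abs_mul]
    exact mul_le_of_le_one_right (abs_nonneg _) (Real.abs_sin_le_one _)
  calc (∑' k : Fin d → ℤ, (φz k : ℂ) * Complex.exp ((θ k : ℂ) * Complex.I))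
      = ∑' k : Fin d → ℤ, (((φz k * Real.cos (θ k) : ℝ) : ℂ)
          + ((φz k * Real.sin (θ k) : ℝ) : ℂ) * Complex.I) := tsum_congr hterm
    _ = (∑' k : Fin d → ℤ, ((φz k * Real.cos (θ k) : ℝ) : ℂ))
          + (∑' k : Fin d → ℤ, ((φz k * Real.sin (θ k) : ℝ) : ℂ) * Complex.I) :=
        Summable.tsum_add hsumm1 hsumm2
    _ = ((symb φ t : ℝ) : ℂ) := by
        rw [← Complex.ofReal_tsum, tsum_mul_right, ← Complex.ofReal_tsum, hsin_zero]
        simp [symb]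
        rfl

/-! ### convolution action bound -/

lemma conv_norm_le {a cf : (Fin d → ℤ) → ℂ} (ha : Summable fun k => ‖a k‖) {Cc : ℝ}
    (hc : ∀ x, ‖cf x‖ ≤ Cc) (j : Fin d → ℤ) :
    ‖conv a cf j‖ ≤ (∑' k, ‖a k‖) * Cc :=
  tsum_of_norm_bounded (ha.hasSum.mul_right Cc) fun l => by
    rw [norm_mul]
    exact mul_le_mul_of_nonneg_left (hc _) (norm_nonneg _)

lemma summable_conv_bdd {a cf : (Fin d → ℤ) → ℂ} (ha : Summable fun k => ‖a k‖) {Cc : ℝ}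
    (hc : ∀ x, ‖cf x‖ ≤ Cc) (j : Fin d → ℤ) :
    Summable fun l => a l * cf (j - l) := by
  refine Summable.of_norm (Summable.of_norm_bounded (ha.mul_right Cc) fun l => ?_)
  rw [norm_norm, norm_mul]
  exact mul_le_mul_of_nonneg_left (hc _) (norm_nonneg _)

end CardInt

theorem stmt_14 {d : ℕ} (φ : (Fin d → ℝ) → ℝ) (hφc : Continuous φ)
    (hφsymm : ∀ x, φ (-x) = φ x)
    (hsum : ∀ x ∈ Set.Icc (0 : Fin d → ℝ) 1,
      Summable fun k : Fin d → ℤ => |φ (x - fun i => (k i : ℝ))|)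
    (M : ℝ)
    (hM : ∀ x ∈ Set.Icc (0 : Fin d → ℝ) 1,
      (∑' k : Fin d → ℤ, |φ (x - fun i => (k i : ℝ))|) ≤ M)
    -- positivity of the (real-valued) cardinal symbol on the torus
    (hpos : ∀ t : Fin d → ℝ,
      0 < ∑' k : Fin d → ℤ,
        φ (fun i => (k i : ℝ)) * Real.cos (∑ i, (k i : ℝ) * t i))
    (c : (Fin d → ℤ) → ℝ) (Cc : ℝ) (hc : ∀ k, |c k| ≤ Cc)
    (hhom : ∀ j : Fin d → ℤ,
      (∑' k : Fin d → ℤ, c k * φ (fun i => ((j i - k i : ℤ) : ℝ))) = 0) :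
    c = 0 := by
  classical
  have h0mem : (0 : Fin d → ℝ) ∈ Set.Icc (0 : Fin d → ℝ) 1 :=
    Set.mem_Icc.2 ⟨le_rfl, zero_le_one⟩
  have hs : Summable fun k : Fin d → ℤ => |φ (fun i => (k i : ℝ))| := by
    have h := hsum 0 h0mem
    refine h.congr fun k => ?_
    congr 1
    rw [zero_sub, hφsymm]
  have hM0 : (∑' k : Fin d → ℤ, |φ (fun i => (k i : ℝ))|) ≤ M := by
    have h := hM 0 h0mem
    refine le_trans (le_of_eq (tsum_congr fun k => ?_)) h
    congr 1
    rw [zero_sub, hφsymm]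
  obtain ⟨t0, hmin⟩ := CardInt.symb_exists_min φ hs
  have hδpos : 0 < CardInt.symb φ t0 := hpos t0
  have hsymbM : ∀ t, CardInt.symb φ t ≤ M := fun t => (CardInt.symb_le φ hs t).trans hM0
  have hMpos : 0 < M := hδpos.trans_le (hsymbM t0)
  have hδM : CardInt.symb φ t0 ≤ M := hsymbM t0
  -- the ℓ¹ element Φ and the contraction b
  set Φ : CardInt.A d := ⟨fun k => ((φ (fun i => (k i : ℝ)) : ℝ) : ℂ),
    CardInt.memℓp_one_iff.2 (by
      simpa only [Complex.norm_real, Real.norm_eq_abs] using hs)⟩ with hΦ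
  have hΦapp : ∀ k, (⇑Φ : (Fin d → ℤ) → ℂ) k = ((φ (fun i => (k i : ℝ)) : ℝ) : ℂ) :=
    fun _ => rfl
  set b : CardInt.A d := 1 - ((M : ℂ))⁻¹ • Φ with hb
  set r : ℝ := 1 - CardInt.symb φ t0 / M with hr
  have hrlt : r < 1 := by
    have h1 : 0 < CardInt.symb φ t0 / M := div_pos hδpos hMpos
    rw [hr]; linarith
  have hspec : ∀ zz ∈ spectrum ℂ b, ‖zz‖ ≤ r := by
    intro zz hzz
    obtain ⟨χ, hχ⟩ := WeakDual.CharacterSpace.mem_spectrum_iff_exists.1 hzz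
    obtain ⟨t, hχt⟩ := CardInt.char_formula χ
    have hχΦ : χ Φ = ((CardInt.symb φ t : ℝ) : ℂ) := by
      rw [hχt Φ, ← CardInt.tsum_exp_eq_symb φ hφsymm hs t]
    have hχb : χ b = ((1 - CardInt.symb φ t / M : ℝ) : ℂ) := by
      rw [hb, map_sub, map_one, map_smul, smul_eq_mul, hχΦ]
      push_cast
      ring
    rw [← hχ, hχb, Complex.norm_real, Real.norm_eq_abs]
    have h1 : CardInt.symb φ t / M ≤ 1 := (div_le_one hMpos).2 (hsymbM t)
    have h2 : CardInt.symb φ t0 / M ≤ 1 := (div_le_one hMpos).2 hδM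
    have h3 : CardInt.symb φ t0 / M ≤ CardInt.symb φ t / M :=
      (div_le_div_iff_of_pos_right hMpos).2 (hmin t)
    refine abs_le.2 ⟨by rw [hr]; linarith, by rw [hr]; linarith⟩
  have hsr : spectralRadius ℂ b ≤ ENNReal.ofReal r := by
    unfold spectralRadius
    refine iSup₂_le fun zz hzz => ?_
    rw [← ENNReal.ofReal_coe_nnreal, coe_nnnorm]
    exact ENNReal.ofReal_le_ofReal (hspec zz hzz)
  have hlt1 : spectralRadius ℂ b < 1 := lt_of_le_of_lt hsr (ENNReal.ofReal_lt_one.2 hrlt)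
  have htend := spectrum.pow_nnnorm_pow_one_div_tendsto_nhds_spectralRadius b
  have hev := htend.eventually_lt_const hlt1
  obtain ⟨N, hNlt, hN1⟩ := (hev.and (Filter.eventually_ge_atTop 1)).exists
  have hbN : ‖b ^ N‖ < 1 := by
    by_contra hcon
    push_neg at hcon
    have h1 : (1 : ℝ≥0∞) ≤ (‖b ^ N‖₊ : ℝ≥0∞) := by
      rw [← ENNReal.ofReal_coe_nnreal, coe_nnnorm]
      exact ENNReal.one_le_ofReal.2 hcon
    have h2 : ((1:ℝ≥0∞)) ^ (1/(N:ℝ)) ≤ ((‖b ^ N‖₊ : ℝ≥0∞)) ^ (1/(N:ℝ)) :=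
      ENNReal.rpow_le_rpow h1 (by positivity)
    rw [ENNReal.one_rpow] at h2
    exact absurd (lt_of_le_of_lt h2 hNlt) (lt_irrefl _)
  -- the complexified bounded sequence
  set cf : (Fin d → ℤ) → ℂ := fun k => ((c k : ℝ) : ℂ) with hcf
  have hcfb : ∀ k, ‖cf k‖ ≤ Cc := fun k => by
    rw [hcf]
    simp only [Complex.norm_real, Real.norm_eq_abs]
    exact hc k
  have hconv1 : CardInt.conv (⇑(1 : CardInt.A d)) cf = cf := CardInt.conv_one_left cf
  have hconvΦ : ∀ j, CardInt.conv (⇑Φ) cf j = 0 := by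
    intro j
    have e := (Equiv.subLeft j).tsum_eq (fun k => (⇑Φ : (Fin d → ℤ) → ℂ) k * cf (j - k))
    simp only [Equiv.subLeft_apply, sub_sub_cancel] at e
    rw [CardInt.conv, ← e]
    have h4 : ∀ k : Fin d → ℤ, (⇑Φ : (Fin d → ℤ) → ℂ) (j - k) * cf k
        = ((c k * φ (fun i => (((j - k) i : ℤ) : ℝ)) : ℝ) : ℂ) := by
      intro k
      rw [hΦapp, hcf]
      push_cast
      ring
    rw [tsum_congr h4, ← Complex.ofReal_tsum]
    have h5 : (∑' k, c k * φ (fun i => (((j - k) i : ℤ) : ℝ))) = 0 := by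
      rw [← hhom j]
      exact tsum_congr fun k => rfl
    rw [h5, Complex.ofReal_zero]
  have hΦsum : Summable fun k => ‖(⇑Φ : (Fin d → ℤ) → ℂ) k‖ := CardInt.summable_norm_coe Φ
  have hconvb : CardInt.conv (⇑b) cf = cf := by
    funext j
    have hbcoe : (⇑b : (Fin d → ℤ) → ℂ) = ⇑(1 : CardInt.A d) - (M:ℂ)⁻¹ • (⇑Φ) := by
      rw [hb, lp.coeFn_sub, lp.coeFn_smul]
    have h1sum : Summable fun k => ‖(⇑(1 : CardInt.A d) : (Fin d → ℤ) → ℂ) k‖ :=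
      CardInt.summable_norm_coe 1
    have h6 : CardInt.conv (⇑b) cf j
        = CardInt.conv (⇑(1 : CardInt.A d)) cf j - (M:ℂ)⁻¹ * CardInt.conv (⇑Φ) cf j := by
      rw [CardInt.conv, CardInt.conv, CardInt.conv]
      have h7 : ∀ l, (⇑b : (Fin d → ℤ) → ℂ) l * cf (j - l)
          = (⇑(1:CardInt.A d) : (Fin d → ℤ) → ℂ) l * cf (j - l)
            - (M:ℂ)⁻¹ * ((⇑Φ : (Fin d → ℤ) → ℂ) l * cf (j - l)) := by
        intro l
        rw [hbcoe]
        simp only [Pi.sub_apply, Pi.smul_apply, smul_eq_mul]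
        ring
      rw [tsum_congr h7, Summable.tsum_sub (CardInt.summable_conv_bdd h1sum hcfb j)
        ((CardInt.summable_conv_bdd hΦsum hcfb j).mul_left _), tsum_mul_left]
    rw [h6, hconvΦ j, hconv1]
    simp
  have hpow : ∀ n : ℕ, CardInt.conv (⇑(b ^ n)) cf = cf := by
    intro n
    induction n with
    | zero => rw [pow_zero]; exact hconv1
    | succ n ih =>
      have hps : b ^ (n + 1) = b * b ^ n := by rw [pow_succ, mul_comm]
      rw [hps, CardInt.coe_mul b (b ^ n),
        CardInt.conv_assoc' (CardInt.summable_norm_coe b)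
          (CardInt.summable_norm_coe (b ^ n)) Cc hcfb, ih, hconvb]
  have hCc0 : 0 ≤ Cc := (abs_nonneg _).trans (hc 0)
  have hbN0 : 0 ≤ ‖b ^ N‖ := norm_nonneg _
  have hkey : ∀ j : Fin d → ℤ, ∀ m : ℕ, ‖cf j‖ ≤ ‖b ^ N‖ ^ (m + 1) * Cc := by
    intro j m
    have h9 : ‖cf j‖ = ‖CardInt.conv (⇑(b ^ (N * (m + 1)))) cf j‖ := by
      rw [hpow (N * (m + 1))]
    rw [h9]
    refine (CardInt.conv_norm_le (CardInt.summable_norm_coe (b ^ (N * (m + 1)))) hcfb j).trans ?_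
    have h11 : (∑' k, ‖(⇑(b ^ (N * (m + 1))) : (Fin d → ℤ) → ℂ) k‖) = ‖b ^ (N * (m + 1))‖ :=
      (CardInt.norm_eq_tsum _).symm
    rw [h11, pow_mul]
    exact mul_le_mul_of_nonneg_right (norm_pow_le' _ (Nat.succ_pos m)) hCc0
  have hzero : ∀ j : Fin d → ℤ, cf j = 0 := by
    intro j
    have htend2 : Filter.Tendsto (fun m : ℕ => ‖b ^ N‖ ^ (m + 1) * Cc) Filter.atTop (nhds 0) := by
      have h12 := (tendsto_pow_atTop_nhds_zero_of_lt_one hbN0 hbN).mul_const Cc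
      rw [zero_mul] at h12
      exact h12.comp (Filter.tendsto_add_atTop_nat 1)
    have h13 : ‖cf j‖ ≤ 0 := ge_of_tendsto' htend2 (hkey j)
    exact norm_eq_zero.1 (le_antisymm h13 (norm_nonneg _))
  funext k
  have h14 := hzero k
  rw [Pi.zero_apply]
  have h15 : ((c k : ℝ) : ℂ) = 0 := h14
  exact_mod_cast h15
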